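/- For $k \geq 3$ there does not exist any subset $P \subset \mathbb{R}^k$ such that $P + \mathfrak{P} = \mathbb{R}^k$ and the translates $\mathbf{r} + \mathfrak{P}^\circ$, $\mathbf{r} \in P$, are pairwise disjoint. In other words, the cross-polytope $\mathfrak{P}$ does not tile $\mathbb{R}^k$ by translations for $k \geq 3$. -/

import Mathlib

open Pointwise

namespace CPT

variable {k : ℕ}

/-- The ℓ¹ "norm" on `Fin k → ℝ`. -/
noncomputable def nrm (x : Fin k → ℝ) : ℝ := ∑ i, |x i|

lemma nrm_nonneg (x : Fin k → ℝ) : 0 ≤ nrm x :=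
  Finset.sum_nonneg fun _ _ => abs_nonneg _

lemma nrm_tri (x y : Fin k → ℝ) : nrm (x + y) ≤ nrm x + nrm y := by
  rw [nrm, nrm, nrm, ← Finset.sum_add_distrib]
  exact Finset.sum_le_sum fun i _ => abs_add_le _ _

lemma nrm_tri_sub (x y z : Fin k → ℝ) : nrm (x - z) ≤ nrm (x - y) + nrm (y - z) := by
  have := nrm_tri (x - y) (y - z)
  simpa using this

lemma nrm_sub_comm (x y : Fin k → ℝ) : nrm (x - y) = nrm (y - x) := by
  unfold nrm
  exact Finset.sum_congr rfl fun i _ => by simpa using abs_sub_comm (x i) (y i)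

lemma nrm_le_card_dist (p q : Fin k → ℝ) : nrm (p - q) ≤ k * dist p q := by
  have h1 : ∀ i, |p i - q i| ≤ dist p q := fun i => by
    simpa [Real.dist_eq] using dist_le_pi_dist p q i
  calc nrm (p - q) = ∑ i, |p i - q i| := by simp [nrm]
    _ ≤ ∑ _i : Fin k, dist p q := Finset.sum_le_sum fun i _ => h1 i
    _ = k * dist p q := by simp [Finset.sum_const, mul_comm]

/-- Local finiteness of a uniformly ℓ¹-separated set. -/
lemma fin_ball (hk : 0 < k) (Q : Set (Fin k → ℝ))
    (hsep : ∀ q ∈ Q, ∀ q' ∈ Q, q ≠ q' → 2 ≤ nrm (q - q')) (C : ℝ) :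
    {q | q ∈ Q ∧ nrm q ≤ C}.Finite := by
  have hkR : (0:ℝ) < k := by exact_mod_cast hk
  have hsub : {q | q ∈ Q ∧ nrm q ≤ C} ⊆ Metric.closedBall (0 : Fin k → ℝ) C := by
    intro q hq
    rw [Metric.mem_closedBall]
    have h0 : 0 ≤ nrm q := nrm_nonneg q
    refine (dist_pi_le_iff (le_trans h0 hq.2)).mpr fun i => ?_
    have : |q i| ≤ nrm q := by
      refine Finset.single_le_sum (f := fun i => |q i|) (fun j _ => abs_nonneg _) (Finset.mem_univ i)
    simpa [Real.dist_eq] using le_trans this hq.2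
  obtain ⟨t, htf, hcover⟩ := (Metric.totallyBounded_iff).mp
    (isCompact_closedBall (0 : Fin k → ℝ) C).totallyBounded ((1:ℝ)/k) (by positivity)
  have hpiece : ∀ y : Fin k → ℝ,
      ({q | (q ∈ Q ∧ nrm q ≤ C) ∧ q ∈ Metric.ball y ((1:ℝ)/k)} : Set (Fin k → ℝ)).Finite := by
    intro y
    refine Set.Subsingleton.finite ?_
    intro p hp q hq
    by_contra hne
    have h2 : 2 ≤ nrm (p - q) := hsep p hp.1.1 q hq.1.1 hne
    have hd : dist p q < 2/k := by
      have := dist_triangle p y q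
      have h1 : dist p y < 1/k := hp.2
      have h2' : dist y q < 1/k := by
        rw [dist_comm]; exact hq.2
      have h5 : dist p q < 1/k + 1/k := lt_of_le_of_lt this (by linarith)
      have h6 : (1:ℝ)/k + 1/k = 2/k := by ring
      linarith
    have : nrm (p - q) < 2 := by
      have := nrm_le_card_dist p q
      have h3 : (k:ℝ) * dist p q < (k:ℝ) * (2/k) := by
        exact mul_lt_mul_of_pos_left hd hkR
      have h4 : (k:ℝ) * (2/k) = 2 := by field_simp
      linarith
    linarith
  refine Set.Finite.subset (Set.Finite.biUnion htf (fun y _ => hpiece y)) ?_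
  intro q hq
  obtain ⟨y, hy, hby⟩ := Set.mem_iUnion₂.mp (hcover (hsub hq))
  exact Set.mem_biUnion hy ⟨hq, hby⟩

lemma exists_const_subseq {α : Type*} {T : Set α} (hT : T.Finite) (f : ℕ → α)
    (hf : ∀ n, f n ∈ T) : ∃ c, {n | f n = c}.Infinite := by
  by_contra h
  push_neg at h
  have h1 : (Set.univ : Set ℕ) ⊆ ⋃ c ∈ T, {n | f n = c} := by
    intro n _
    exact Set.mem_biUnion (hf n) rfl
  exact Set.infinite_univ (Set.Finite.subset (hT.biUnion fun c _ => h c) h1)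

/-- Key structure lemma: every point of the open facet simplex `{y > 0, ∑ y = 1}` is
dominated by some center `r ∈ Q` with `∑ r = 2`. -/
lemma cov (hk : 0 < k) (Q : Set (Fin k → ℝ)) (h0 : (0 : Fin k → ℝ) ∈ Q)
    (hcov : ∀ x : Fin k → ℝ, ∃ q ∈ Q, nrm (x - q) ≤ 1)
    (hsep : ∀ q ∈ Q, ∀ q' ∈ Q, q ≠ q' → 2 ≤ nrm (q - q'))
    (y : Fin k → ℝ) (hy : ∀ i, 0 < y i) (hsum : ∑ i, y i = 1) :
    ∃ r ∈ Q, (∀ i, y i ≤ r i) ∧ ∑ i, r i = 2 := by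
  have hkR : (0:ℝ) < k := by exact_mod_cast hk
  set t : ℕ → ℝ := fun n => 1/(n+1) with ht
  have htpos : ∀ n, 0 < t n := fun n => by positivity
  have htle : ∀ n, t n ≤ 1 := fun n => by
    rw [ht]
    rw [div_le_one (by positivity)]
    have : (0:ℝ) ≤ n := Nat.cast_nonneg n
    linarith
  set xf : ℕ → Fin k → ℝ := fun n i => y i + t n with hxf
  choose g hgQ hgd using fun n => hcov (xf n)
  have hnrm_y : nrm y = 1 := by
    rw [nrm, ← hsum]
    exact Finset.sum_congr rfl fun i _ => abs_of_pos (hy i)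
  have hnrmxf : ∀ n, nrm (xf n) = 1 + k * t n := by
    intro n
    have : ∀ i, |xf n i| = y i + t n := fun i => abs_of_pos (by have := hy i; have := htpos n; simp only [hxf]; linarith)
    rw [nrm]
    rw [Finset.sum_congr rfl fun i _ => this i, Finset.sum_add_distrib, hsum]
    simp [mul_comm]
  have hyxf : ∀ n, nrm (y - xf n) = k * t n := by
    intro n
    rw [nrm]
    have : ∀ i, |y i - xf n i| = t n := fun i => by
      simp only [hxf]
      rw [show y i - (y i + t n) = -(t n) by ring, abs_neg, abs_of_pos (htpos n)]
    simp only [Pi.sub_apply]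
    rw [Finset.sum_congr rfl fun i _ => this i]
    simp [mul_comm]
  have hgne : ∀ n, g n ≠ 0 := by
    intro n hgn
    have := hgd n
    rw [hgn, sub_zero, hnrmxf n] at this
    nlinarith [htpos n, hkR]
  have hg2 : ∀ n, 2 ≤ nrm (g n) := by
    intro n
    have := hsep (g n) (hgQ n) 0 h0 (hgne n)
    simpa using this
  have hgbd : ∀ n, nrm (g n) ≤ 2 + k := by
    intro n
    have h1 : nrm (g n - 0) ≤ nrm (g n - xf n) + nrm (xf n - 0) := nrm_tri_sub _ _ _
    rw [sub_zero, sub_zero] at h1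
    have h2 : nrm (g n - xf n) = nrm (xf n - g n) := nrm_sub_comm _ _
    have h3 := hgd n
    have h4 := hnrmxf n
    have h5 : k * t n ≤ k * 1 := mul_le_mul_of_nonneg_left (htle n) (le_of_lt hkR)
    linarith
  obtain ⟨c, hc⟩ := exists_const_subseq (fin_ball hk Q hsep (2 + k)) g
    (fun n => ⟨hgQ n, hgbd n⟩)
  obtain ⟨n₀, hn₀⟩ := hc.nonempty
  have hcQ : c ∈ Q := hn₀ ▸ hgQ n₀
  have hc2 : 2 ≤ nrm c := hn₀ ▸ hg2 n₀
  -- nrm (y - c) ≤ 1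
  have hyc : nrm (y - c) ≤ 1 := by
    refine le_of_forall_pos_le_add fun ε hε => ?_
    obtain ⟨n, hnM, hn⟩ := hc.exists_gt ⌈(k:ℝ)/ε⌉₊
    have hn' : (k:ℝ)/ε < n + 1 := by
      have h1 : (k:ℝ)/ε ≤ ⌈(k:ℝ)/ε⌉₊ := Nat.le_ceil _
      have h2 : (⌈(k:ℝ)/ε⌉₊ : ℝ) < n := by exact_mod_cast hn
      linarith
    have hkt : k * t n < ε := by
      rw [ht]
      rw [div_lt_iff₀ hε] at hn'
      have hpos : (0:ℝ) < (n:ℝ) + 1 := by positivity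
      rw [mul_one_div, div_lt_iff₀ hpos]
      linarith [hn']
    have h1 : nrm (y - c) ≤ nrm (y - xf n) + nrm (xf n - c) := nrm_tri_sub _ _ _
    have h2 : nrm (xf n - c) ≤ 1 := by
      have := hgd n
      rwa [show g n = c from hnM] at this
    rw [hyxf n] at h1
    linarith
  have hcy1 : nrm (c - y) ≤ 1 := (nrm_sub_comm c y) ▸ hyc
  have htri : nrm c ≤ nrm y + nrm (c - y) := by
    have := nrm_tri y (c - y)
    simpa using this
  have hcy_eq : nrm (c - y) = 1 := le_antisymm hcy1 (by rw [hnrm_y] at htri; linarith)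
  have hc_eq : nrm c = 2 := le_antisymm (by rw [hnrm_y, hcy_eq] at htri; linarith) hc2
  -- componentwise equality
  have hterm0 : ∀ i, y i + |c i - y i| - |c i| = 0 := by
    have hsum0 : ∑ i, (y i + |c i - y i| - |c i|) = 0 := by
      rw [Finset.sum_sub_distrib, Finset.sum_add_distrib, hsum]
      have e1 : ∑ i, |c i - y i| = 1 := hcy_eq
      have e2 : ∑ i, |c i| = 2 := hc_eq
      rw [e1, e2]; ring
    have hnn : ∀ i ∈ Finset.univ, 0 ≤ y i + |c i - y i| - |c i| := by
      intro i _
      have h1 : |c i| ≤ |y i| + |c i - y i| := by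
        have := abs_add_le (y i) (c i - y i)
        simpa using this
      have h2 : |y i| = y i := abs_of_pos (hy i)
      linarith
    intro i
    exact (Finset.sum_eq_zero_iff_of_nonneg hnn).mp hsum0 i (Finset.mem_univ i)
  have hyc_le : ∀ i, y i ≤ c i := by
    intro i
    have h := hterm0 i
    rcases abs_cases (c i) with ⟨h1, h2⟩ | ⟨h1, h2⟩ <;>
      rcases abs_cases (c i - y i) with ⟨h3, h4⟩ | ⟨h3, h4⟩ <;>
      · rw [h1, h3] at h
        have := hy i
        linarith
  refine ⟨c, hcQ, hyc_le, ?_⟩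
  have : ∑ i, c i = ∑ i, |c i| := by
    refine Finset.sum_congr rfl fun i _ => ?_
    rw [abs_of_pos (lt_of_lt_of_le (hy i) (hyc_le i))]
  rw [this]
  exact hc_eq

/-- Strengthened covering: the dominating center can be forced to be strictly larger
in a chosen coordinate `j`. -/
lemma covp (hk : 0 < k) (Q : Set (Fin k → ℝ)) (h0 : (0 : Fin k → ℝ) ∈ Q)
    (hcov : ∀ x : Fin k → ℝ, ∃ q ∈ Q, nrm (x - q) ≤ 1)
    (hsep : ∀ q ∈ Q, ∀ q' ∈ Q, q ≠ q' → 2 ≤ nrm (q - q'))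
    (x : Fin k → ℝ) (hx : ∀ i, 0 < x i) (hxs : ∑ i, x i = 1)
    (j a : Fin k) (hja : j ≠ a) :
    ∃ s ∈ Q, (∀ i, x i ≤ s i) ∧ x j < s j ∧ ∑ i, s i = 2 := by
  set e : ℕ → ℝ := fun n => x a / (n+2) with he
  have hepos : ∀ n, 0 < e n := fun n => by
    have := hx a; positivity
  have helt : ∀ n, e n < x a := fun n => by
    rw [he]
    have hxa := hx a
    rw [div_lt_iff₀ (by positivity)]
    nlinarith [Nat.cast_nonneg (α := ℝ) n]
  set xn : ℕ → Fin k → ℝ := fun n i =>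
    x i + (if i = j then e n else 0) - (if i = a then e n else 0) with hxn
  have hxnpos : ∀ n i, 0 < xn n i := by
    intro n i
    simp only [hxn]
    by_cases hij : i = j
    · subst hij
      simp only [if_pos rfl, if_true, if_neg hja]
      have := hx i; have := hepos n
      linarith
    · by_cases hia : i = a
      · subst hia
        simp only [if_neg hij, if_pos rfl, if_true]
        have := helt n
        linarith
      · simp only [if_neg hij, if_neg hia]
        have := hx i
        linarith
  have hxnsum : ∀ n, ∑ i, xn n i = 1 := by
    intro n
    simp only [hxn]
    rw [Finset.sum_sub_distrib, Finset.sum_add_distrib, hxs,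
      Finset.sum_ite_eq' Finset.univ j (fun _ => e n),
      Finset.sum_ite_eq' Finset.univ a (fun _ => e n)]
    simp
  choose g hgQ hgdom hgsum using fun n =>
    cov hk Q h0 hcov hsep (xn n) (hxnpos n) (hxnsum n)
  have hgpos : ∀ n i, 0 < g n i := fun n i => lt_of_lt_of_le (hxnpos n i) (hgdom n i)
  have hgbd : ∀ n, nrm (g n) ≤ 2 := by
    intro n
    have : nrm (g n) = ∑ i, g n i :=
      Finset.sum_congr rfl fun i _ => abs_of_pos (hgpos n i)
    rw [this, hgsum n]
  obtain ⟨c, hc⟩ := exists_const_subseq (fin_ball hk Q hsep 2) g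
    (fun n => ⟨hgQ n, hgbd n⟩)
  obtain ⟨n₀, hn₀⟩ := hc.nonempty
  have hcQ : c ∈ Q := hn₀ ▸ hgQ n₀
  have hcsum : ∑ i, c i = 2 := hn₀ ▸ hgsum n₀
  have hcj : x j < c j := by
    have := hgdom n₀ j
    rw [hn₀] at this
    simp only [hxn, if_pos rfl, if_true, if_neg hja] at this
    have := hepos n₀
    -- xn n₀ j = x j + e n₀ ≤ c j
    linarith [hgdom n₀ j, hepos n₀]
  have hca : x a ≤ c a := by
    refine le_of_forall_pos_le_add fun ε hε => ?_
    obtain ⟨n, hnM, hn⟩ := hc.exists_gt ⌈x a / ε⌉₊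
    have hn' : x a / ε < n + 2 := by
      have h1 : x a/ε ≤ ⌈x a/ε⌉₊ := Nat.le_ceil _
      have h2 : (⌈x a/ε⌉₊ : ℝ) < n := by exact_mod_cast hn
      linarith
    have hen : e n < ε := by
      rw [he, div_lt_iff₀ (by positivity)]
      rw [div_lt_iff₀ hε] at hn'
      linarith
    have := hgdom n a
    rw [hnM] at this
    simp only [hxn, if_neg (Ne.symm hja), if_pos rfl, if_true] at this
    linarith
  refine ⟨c, hcQ, fun i => ?_, hcj, hcsum⟩
  by_cases hij : i = j
  · exact hij ▸ le_of_lt hcj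
  · by_cases hia : i = a
    · exact hia ▸ hca
    · have := hgdom n₀ i
      rw [hn₀] at this
      simp only [hxn, if_neg hij, if_neg hia] at this
      linarith

/-- The main abstract contradiction: for `k ≥ 3` there is no perfect ℓ¹-code in `ℝ^k`. -/
lemma main (hk3 : 3 ≤ k) (Q : Set (Fin k → ℝ)) (h0 : (0 : Fin k → ℝ) ∈ Q)
    (hcov : ∀ x : Fin k → ℝ, ∃ q ∈ Q, nrm (x - q) ≤ 1)
    (hsep : ∀ q ∈ Q, ∀ q' ∈ Q, q ≠ q' → 2 ≤ nrm (q - q')) : False := by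
  have hk : 0 < k := by omega
  haveI : Nonempty (Fin k) := ⟨⟨0, hk⟩⟩
  have hkR : (0:ℝ) < k := by exact_mod_cast hk
  -- the center above the barycenter of the facet
  obtain ⟨r, hrQ, hry, hrs⟩ := cov hk Q h0 hcov hsep (fun _ => (k:ℝ)⁻¹)
    (fun _ => by positivity) (by
      rw [Finset.sum_const]
      simp only [Finset.card_univ, Fintype.card_fin, nsmul_eq_mul]
      field_simp)
  have hr0 : ∀ i, 0 < r i := fun i => lt_of_lt_of_le (by positivity) (hry i)
  -- a coordinate with r j < 1
  obtain ⟨j, hj1⟩ : ∃ j, r j < 1 := by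
    by_contra h
    push_neg at h
    have h3 : (3:ℝ) ≤ ∑ i, r i := by
      calc (3:ℝ) ≤ (k:ℝ) := by exact_mod_cast hk3
        _ = ∑ _i : Fin k, (1:ℝ) := by simp
        _ ≤ ∑ i, r i := Finset.sum_le_sum fun i _ => h i
    rw [hrs] at h3
    linarith
  -- two other distinct coordinates
  obtain ⟨a, b, hab, haj, hbj⟩ : ∃ a b : Fin k, a ≠ b ∧ a ≠ j ∧ b ≠ j := by
    have h0k : (0:ℕ) < k := by omega
    have h1k : (1:ℕ) < k := by omega
    have h2k : (2:ℕ) < k := by omega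
    by_cases hj0 : j = ⟨0, h0k⟩
    · exact ⟨⟨1, h1k⟩, ⟨2, h2k⟩, by simp [Fin.ext_iff], by simp [hj0, Fin.ext_iff],
        by simp [hj0, Fin.ext_iff]⟩
    · by_cases hj1' : j = ⟨1, h1k⟩
      · exact ⟨⟨0, h0k⟩, ⟨2, h2k⟩, by simp [Fin.ext_iff], by simp [hj1', Fin.ext_iff],
          by simp [hj1', Fin.ext_iff]⟩
      · exact ⟨⟨0, h0k⟩, ⟨1, h1k⟩, by simp [Fin.ext_iff],
          fun h => hj0 h.symm, fun h => hj1' h.symm⟩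
  set cc : ℝ := (1 - r j)/(2 - r j) with hcc
  have h2rj : 0 < 2 - r j := by linarith
  have hcc0 : 0 < cc := div_pos (by linarith) h2rj
  have hcc1 : cc < 1 := (div_lt_one h2rj).mpr (by linarith)
  set δ : ℝ := min ((1-cc) * r a) (cc * r b) with hδdef
  have hδ : 0 < δ := lt_min (by nlinarith [hr0 a]) (by nlinarith [hr0 b])
  set L : ℕ → ℝ := fun n => δ/(n+2) with hL
  have hLpos : ∀ n, 0 < L n := fun n => by positivity
  have hLlt : ∀ n, L n < δ := fun n => by
    rw [hL]
    refine div_lt_self hδ ?_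
    have : (0:ℝ) ≤ n := Nat.cast_nonneg n
    linarith
  set xl : ℕ → Fin k → ℝ := fun n i =>
    (if i = j then r j else cc * r i) + (if i = a then L n else 0)
      - (if i = b then L n else 0) with hxl
  have hxlj : ∀ n, xl n j = r j := fun n => by
    simp [hxl, if_neg (Ne.symm haj), if_neg (Ne.symm hbj)]
  have hxlpos : ∀ n i, 0 < xl n i := by
    intro n i
    simp only [hxl]
    by_cases hij : i = j
    · rw [if_pos hij, if_neg (hij ▸ Ne.symm haj), if_neg (hij ▸ Ne.symm hbj)]
      simpa using hr0 j
    · rw [if_neg hij]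
      by_cases hia : i = a
      · rw [if_pos hia, if_neg (hia ▸ hab)]
        have := hLpos n
        nlinarith [hr0 a, hcc0, mul_pos hcc0 (hr0 i)]
      · rw [if_neg hia]
        by_cases hib : i = b
        · rw [if_pos hib]
          have h1 : L n < cc * r b := lt_of_lt_of_le (hLlt n) (min_le_right _ _)
          have : cc * r i = cc * r b := by rw [hib]
          linarith
        · rw [if_neg hib]
          have := mul_pos hcc0 (hr0 i)
          linarith
  have hxllt : ∀ n i, i ≠ j → xl n i < r i := by
    intro n i hij
    simp only [hxl]
    rw [if_neg hij]
    by_cases hia : i = a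
    · rw [if_pos hia, if_neg (hia ▸ hab)]
      have h1 : L n < (1-cc) * r a := lt_of_lt_of_le (hLlt n) (min_le_left _ _)
      subst hia
      nlinarith
    · rw [if_neg hia]
      have h2 : cc * r i < r i := by nlinarith [hr0 i]
      by_cases hib : i = b
      · rw [if_pos hib]
        have := hLpos n
        linarith
      · rw [if_neg hib]
        linarith
  have hxlsum : ∀ n, ∑ i, xl n i = 1 := by
    intro n
    have hbase : ∑ i, (if i = j then r j else cc * r i) = 1 := by
      have hre : ∀ i, (if i = j then r j else cc * r i)
          = cc * r i + (if i = j then r j - cc * r j else 0) := by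
        intro i
        by_cases h : i = j
        · subst h; simp
        · simp [h]
      rw [Finset.sum_congr rfl fun i _ => hre i, Finset.sum_add_distrib,
        ← Finset.mul_sum, hrs, Finset.sum_ite_eq' Finset.univ j
          (fun _ => r j - cc * r j)]
      simp only [Finset.mem_univ, if_true]
      rw [hcc]
      field_simp
      ring
    simp only [hxl]
    rw [Finset.sum_sub_distrib, Finset.sum_add_distrib, hbase,
      Finset.sum_ite_eq' Finset.univ a (fun _ => L n),
      Finset.sum_ite_eq' Finset.univ b (fun _ => L n)]
    simp
  -- for each n, the center above xl n
  choose s hsQ hsdom hsj hssum using fun n =>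
    covp hk Q h0 hcov hsep (xl n) (hxlpos n) (hxlsum n) j a (Ne.symm haj)
  have hspos : ∀ n i, 0 < s n i := fun n i => lt_of_lt_of_le (hxlpos n i) (hsdom n i)
  have hsjr : ∀ n, r j < s n j := fun n => by
    have := hsj n
    rwa [hxlj n] at this
  -- dichotomy: off coordinate j, s n is pinned to xl n
  have hfix : ∀ n i, i ≠ j → s n i = xl n i := by
    intro n i0 hi0j
    by_contra hne
    have hlt : xl n i0 < s n i0 := lt_of_le_of_ne (hsdom n i0) (fun h => hne h.symm)
    set m : ℝ := ∑ i, min (r i) (s n i) with hm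
    have hmge : ∀ i ∈ Finset.univ, xl n i ≤ min (r i) (s n i) := by
      intro i _
      by_cases hij : i = j
      · subst hij
        rw [hxlj n]
        exact le_min (le_refl _) (le_of_lt (hsjr n))
      · exact le_min (le_of_lt (hxllt n i hij)) (hsdom n i)
    have hm1 : 1 < m := by
      rw [hm, ← hxlsum n]
      exact Finset.sum_lt_sum hmge
        ⟨i0, Finset.mem_univ i0, lt_min (hxllt n i0 hi0j) hlt⟩
    have hm0 : (0:ℝ) < m := by linarith
    set y' : Fin k → ℝ := fun i => min (r i) (s n i) / m with hy'
    have hminpos : ∀ i, 0 < min (r i) (s n i) := fun i => lt_min (hr0 i) (hspos n i)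
    have hy'r : ∀ i, y' i < r i := fun i =>
      lt_of_lt_of_le (div_lt_self (hminpos i) hm1) (min_le_left _ _)
    have hy's : ∀ i, y' i < s n i := fun i =>
      lt_of_lt_of_le (div_lt_self (hminpos i) hm1) (min_le_right _ _)
    have hy'sum : ∑ i, y' i = 1 := by
      simp only [hy']
      rw [← Finset.sum_div, ← hm]
      exact div_self (ne_of_gt hm0)
    have hlt2 : nrm (r - s n) < 2 := by
      have habs : ∀ i ∈ Finset.univ, |r i - s n i| < (r i - y' i) + (s n i - y' i) := by
        intro i _
        refine abs_sub_lt_iff.mpr ⟨?_, ?_⟩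
        · have := hy's i; linarith
        · have := hy'r i; linarith
      have h1 : nrm (r - s n) = ∑ i, |r i - s n i| := by
        simp [nrm]
      have h2 : ∑ i, |r i - s n i| < ∑ i, ((r i - y' i) + (s n i - y' i)) :=
        Finset.sum_lt_sum_of_nonempty Finset.univ_nonempty habs
      have h3 : ∑ i, ((r i - y' i) + (s n i - y' i)) = 2 := by
        rw [Finset.sum_add_distrib, Finset.sum_sub_distrib, Finset.sum_sub_distrib,
          hrs, hssum n, hy'sum]
        ring
      rw [h1]
      rw [h3] at h2
      exact h2
    have hne_rs : r ≠ s n := by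
      intro h
      have := hsjr n
      rw [h] at this
      exact lt_irrefl _ this
    have := hsep r hrQ (s n) (hsQ n) hne_rs
    linarith
  -- injectivity via coordinate a
  have hsa : ∀ n, s n a = cc * r a + L n := by
    intro n
    rw [hfix n a haj]
    simp [hxl, if_neg haj, if_neg hab]
  have hsnrm : ∀ n, nrm (s n) ≤ 2 := by
    intro n
    have : nrm (s n) = ∑ i, s n i :=
      Finset.sum_congr rfl fun i _ => abs_of_pos (hspos n i)
    rw [this, hssum n]
  have hinj : Function.Injective s := by
    intro n m hnm
    have h1 : cc * r a + L n = cc * r a + L m := by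
      rw [← hsa n, ← hsa m, hnm]
    have h2 : L n = L m := by linarith
    rw [hL] at h2
    simp only at h2
    field_simp at h2
    exact_mod_cast (add_right_cancel h2).symm
  exact Set.not_infinite.mpr (fin_ball hk Q hsep 2)
    (Set.infinite_of_injective_forall_mem hinj (fun n => ⟨hsQ n, hsnrm n⟩))

end CPT

open CPT in
/-- For `k ≥ 3`, the cross-polytope `𝔓 = {x ∈ ℝ^k : ∑|x_i| ≤ 1}` does not tile `ℝ^k` by
translations: there is no set `P ⊆ ℝ^k` with `P + 𝔓 = ℝ^k` such that the translated open
cross-polytopes `r + 𝔓°`, `r ∈ P`, are pairwise disjoint. -/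
theorem crosspolytope_no_tiling (k : ℕ) (hk : 3 ≤ k) :
    ¬ ∃ P : Set (Fin k → ℝ),
        P + {x : Fin k → ℝ | (∑ i, |x i|) ≤ 1} = Set.univ ∧
        ∀ r ∈ P, ∀ s ∈ P, r ≠ s →
          Disjoint {x : Fin k → ℝ | x - r ∈ interior {x : Fin k → ℝ | (∑ i, |x i|) ≤ 1}}
            {x : Fin k → ℝ | x - s ∈ interior {x : Fin k → ℝ | (∑ i, |x i|) ≤ 1}} := by
  rintro ⟨P, hPcov, hPdisj⟩
  set S : Set (Fin k → ℝ) := {x : Fin k → ℝ | (∑ i, |x i|) ≤ 1} with hS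
  have h0univ : (0 : Fin k → ℝ) ∈ P + S := by rw [hPcov]; trivial
  obtain ⟨p₀, hp₀, y₀, hy₀, hpy₀⟩ := Set.mem_add.mp h0univ
  set Q : Set (Fin k → ℝ) := (fun x => x - p₀) '' P with hQ
  have h0Q : (0 : Fin k → ℝ) ∈ Q := ⟨p₀, hp₀, sub_self p₀⟩
  have hcovQ : ∀ x : Fin k → ℝ, ∃ q ∈ Q, nrm (x - q) ≤ 1 := by
    intro x
    have hx : x + p₀ ∈ P + S := by rw [hPcov]; trivial
    obtain ⟨p, hp, y, hy, hpy⟩ := Set.mem_add.mp hx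
    refine ⟨p - p₀, ⟨p, hp, rfl⟩, ?_⟩
    have hxy : x - (p - p₀) = y := by
      have : p + y = x + p₀ := hpy
      funext i
      have := congrFun this i
      simp only [Pi.add_apply] at this
      simp only [Pi.sub_apply]
      linarith
    rw [hxy]
    exact hy
  have hopen_sub : {z : Fin k → ℝ | nrm z < 1} ⊆ interior S := by
    refine interior_maximal (fun z hz => ?_) ?_
    · show (∑ i, |z i|) ≤ 1
      exact le_of_lt hz
    have hcont : Continuous (fun z : Fin k → ℝ => nrm z) := by
      unfold nrm
      exact continuous_finset_sum _ (fun i _ => (continuous_apply i).abs)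
    exact isOpen_lt hcont continuous_const
  have hsepQ : ∀ q ∈ Q, ∀ q' ∈ Q, q ≠ q' → 2 ≤ nrm (q - q') := by
    rintro _ ⟨p, hp, rfl⟩ _ ⟨p', hp', rfl⟩ hne
    have hpp' : p ≠ p' := by
      intro h; exact hne (by rw [h])
    have hsub : (p - p₀) - (p' - p₀) = p - p' := by
      funext i; simp only [Pi.sub_apply]; ring
    rw [hsub]
    by_contra hlt
    push_neg at hlt
    have hd := hPdisj p hp p' hp' hpp'
    set mid : Fin k → ℝ := fun i => (p i + p' i)/2 with hmid
    have hnm1 : nrm (mid - p) < 1 := by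
      have he : ∀ i, |(mid - p) i| = |p i - p' i|/2 := by
        intro i
        simp only [Pi.sub_apply, hmid]
        rw [show (p i + p' i)/2 - p i = -((p i - p' i)/2) by ring, abs_neg, abs_div]
        norm_num
      rw [nrm, Finset.sum_congr rfl fun i _ => he i, ← Finset.sum_div]
      have : ∑ i, |p i - p' i| < 2 := hlt
      linarith
    have hnm2 : nrm (mid - p') < 1 := by
      have he : ∀ i, |(mid - p') i| = |p i - p' i|/2 := by
        intro i
        simp only [Pi.sub_apply, hmid]
        rw [show (p i + p' i)/2 - p' i = (p i - p' i)/2 by ring, abs_div]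
        norm_num
      rw [nrm, Finset.sum_congr rfl fun i _ => he i, ← Finset.sum_div]
      have : ∑ i, |p i - p' i| < 2 := hlt
      linarith
    have hm1 : mid ∈ {x : Fin k → ℝ | x - p ∈ interior S} := hopen_sub hnm1
    have hm2 : mid ∈ {x : Fin k → ℝ | x - p' ∈ interior S} := hopen_sub hnm2
    exact Set.disjoint_left.mp hd hm1 hm2
  exact main hk Q h0Q hcovQ hsepQ
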